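/- Let r > 0 be a real number, let n, n′ ≥ 1 be integers, and let a < b be real numbers. Then σ_r(a, b, n) < σ_r(a, b, n′) if and only if n′ < n. In other words, when the same strict increase in value is achieved on a shorter path, the r-biased slope is strictly greater. -/

import Mathlib

/-- The `r`-biased slope of a path of length `n` whose initial vertex has value `a`
and whose terminal vertex has value `b`: `σ_r(a, b, n) = (b - rⁿ a)/(1 + r + ⋯ + rⁿ⁻¹)`. -/
noncomputable def biasedSlope (r : ℝ) (a b : ℝ) (n : ℕ) : ℝ :=
  (b - r ^ n * a) / (∑ i ∈ Finset.range n, r ^ i)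

lemma biasedSlope_step (r : ℝ) (hr : 0 < r) (a b : ℝ) (hab : a < b) (m : ℕ) (hm : 1 ≤ m) :
    biasedSlope r a b (m + 1) < biasedSlope r a b m := by
  have hS : 0 < ∑ i ∈ Finset.range m, r ^ i :=
    Finset.sum_pos (fun i _ => pow_pos hr i) (Finset.nonempty_range_iff.2 (by omega))
  have hS' : 0 < ∑ i ∈ Finset.range (m + 1), r ^ i :=
    Finset.sum_pos (fun i _ => pow_pos hr i) (Finset.nonempty_range_iff.2 (by omega))
  have hgeom : (∑ i ∈ Finset.range m, r ^ i) * (r - 1) = r ^ m - 1 := geom_sum_mul r m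
  have hpow : 0 < r ^ m := pow_pos hr m
  unfold biasedSlope
  rw [div_lt_div_iff₀ hS' hS]
  rw [Finset.sum_range_succ]
  have key : (b - r ^ m * a) * (∑ i ∈ Finset.range m, r ^ i + r ^ m)
      - (b - r ^ (m + 1) * a) * (∑ i ∈ Finset.range m, r ^ i) = r ^ m * (b - a) := by
    linear_combination (a * r ^ m) * hgeom
  nlinarith [mul_pos hpow (sub_pos.2 hab)]

theorem stmt_8 (r : ℝ) (hr : 0 < r) (n n' : ℕ) (hn : 1 ≤ n) (hn' : 1 ≤ n')
    (a b : ℝ) (hab : a < b) :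
    biasedSlope r a b n < biasedSlope r a b n' ↔ n' < n := by
  have hanti : StrictAnti (fun k : ℕ => biasedSlope r a b (k + 1)) :=
    strictAnti_nat_of_succ_lt (fun k => biasedSlope_step r hr a b hab (k + 1) (by omega))
  obtain ⟨m, rfl⟩ : ∃ m, n = m + 1 := ⟨n - 1, by omega⟩
  obtain ⟨m', rfl⟩ : ∃ m', n' = m' + 1 := ⟨n' - 1, by omega⟩
  rw [show biasedSlope r a b (m + 1) < biasedSlope r a b (m' + 1) ↔
      (fun k : ℕ => biasedSlope r a b (k + 1)) m < (fun k : ℕ => biasedSlope r a b (k + 1)) m'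
      from Iff.rfl, hanti.lt_iff_gt]
  omega
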